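/- Let k₀ = π/2, α = c²k₀² - 2, and suppose |λ| < 1 and θ ∈ [0, 2π). Then the function u(x) = 1 + λ sin(k₀ x + θ) satisfies c²u''(x) - (u(x+1) - 2u(x) + u(x-1)) + α u(x) - α sgn(u(x)) = 0 for all x ∈ ℝ. -/

import Mathlib

open Real

lemma upos (lam a : ℝ) (hlam : |lam| < 1) : 0 < 1 + lam * Real.sin a := by
  have h : |lam * Real.sin a| < 1 := by
    calc |lam * Real.sin a| = |lam| * |Real.sin a| := abs_mul _ _
    _ ≤ |lam| * 1 := by
        exact mul_le_mul_of_nonneg_left (abs_sin_le_one a) (abs_nonneg _)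
    _ < 1 := by linarith
  have := abs_lt.mp h
  linarith [this.1]

/-- With `k₀ = π/2`, `α = c²k₀² - 2`, `|λ| < 1` and `θ ∈ [0, 2π)`, the
function `u(x) = 1 + λ sin(k₀ x + θ)` satisfies
`c²u''(x) - (u(x+1) - 2u(x) + u(x-1)) + α u(x) - α sgn(u(x)) = 0` for all `x`. -/
theorem stmt_3 (c lam θ : ℝ) (hlam : |lam| < 1) (hθ : θ ∈ Set.Ico 0 (2 * π)) :
    let k₀ : ℝ := π / 2
    let α : ℝ := c ^ 2 * k₀ ^ 2 - 2
    let u : ℝ → ℝ := fun x => 1 + lam * Real.sin (k₀ * x + θ)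
    ∀ x : ℝ,
      c ^ 2 * deriv (deriv u) x - (u (x + 1) - 2 * u x + u (x - 1))
        + α * u x - α * Real.sign (u x) = 0 := by
  intro k₀ α u x
  have hder : ∀ y : ℝ, HasDerivAt u (lam * Real.cos (k₀ * y + θ) * k₀) y := by
    intro y
    have h1 : HasDerivAt (fun y : ℝ => k₀ * y + θ) k₀ y := by
      simpa using ((hasDerivAt_id y).const_mul k₀).add_const θ
    have h2 := (h1.sin).const_mul lam
    exact (h2.const_add 1).congr_deriv (by ring)
  have hd1 : deriv u = fun y => lam * Real.cos (k₀ * y + θ) * k₀ :=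
    funext fun y => (hder y).deriv
  have hder2 : HasDerivAt (deriv u) (lam * (-Real.sin (k₀ * x + θ)) * k₀ * k₀) x := by
    rw [hd1]
    have h1 : HasDerivAt (fun y : ℝ => k₀ * y + θ) k₀ x := by
      simpa using ((hasDerivAt_id x).const_mul k₀).add_const θ
    have h2 := (h1.cos.const_mul lam).mul_const k₀
    exact h2.congr_deriv (by ring)
  have hd2 : deriv (deriv u) x = lam * (-Real.sin (k₀ * x + θ)) * k₀ * k₀ := hder2.deriv
  have hsign : Real.sign (u x) = 1 := Real.sign_of_pos (upos lam _ hlam)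
  have hsinp : Real.sin (k₀ * (x + 1) + θ) = Real.cos (k₀ * x + θ) := by
    have : k₀ * (x + 1) + θ = (k₀ * x + θ) + π / 2 := by simp [k₀]; ring
    rw [this, Real.sin_add_pi_div_two]
  have hsinm : Real.sin (k₀ * (x - 1) + θ) = -Real.cos (k₀ * x + θ) := by
    have : k₀ * (x - 1) + θ = (k₀ * x + θ) - π / 2 := by simp [k₀]; ring
    rw [this, Real.sin_sub_pi_div_two]
  simp only [u, hd2, hsign, hsinp, hsinm, α]
  ring
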